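/- Let ℏ > 0, n ≥ 1, and let Σ be a real symmetric positive definite (2n) × (2n) matrix such that the complex matrix Σ + (iℏ/2) J is positive semidefinite (Hermitian positive semidefinite), where J = [[0, I_n], [−I_n, 0]] is the standard symplectic matrix. Then det Σ = (ℏ/2)^{2n} if and only if there exists a real symplectic matrix S (i.e., Sᵀ J S = J) such that Σ = (ℏ/2) Sᵀ S. Equivalently, the Gaussian state with covariance matrix Σ has purity (ℏ/2)^n (det Σ)^{−1/2} equal to 1 (is a pure state) exactly when Σ = (ℏ/2) Sᵀ S for some symplectic S. -/

import Mathlib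

open Matrix
open scoped ComplexOrder

section Helpers

variable {ι : Type*} [Fintype ι] [DecidableEq ι]

omit [DecidableEq ι] in
lemma dot_transpose' (M : Matrix ι ι ℝ) (u v : ι → ℝ) :
    u ⬝ᵥ (M *ᵥ v) = v ⬝ᵥ (Mᵀ *ᵥ u) := by
  rw [dotProduct_mulVec, ← mulVec_transpose, dotProduct_comm]

lemma posDef_smul_helper {c : ℝ} (hc : 0 < c) {A : Matrix ι ι ℝ} (hA : A.PosDef) :
    (c • A).PosDef := by
  refine Matrix.PosDef.of_dotProduct_mulVec_pos ?_ (fun x hx => ?_)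
  · have h := hA.1.eq
    unfold Matrix.IsHermitian
    rw [conjTranspose_smul, h]
    simp
  · have h := hA.dotProduct_mulVec_pos hx
    rw [smul_mulVec, dotProduct_smul, smul_eq_mul]
    exact mul_pos hc h

lemma posDef_conj_helper {A : Matrix ι ι ℝ} (hA : A.PosDef) (B : Matrix ι ι ℝ)
    (hB : IsUnit B.det) : (Bᵀ * A * B).PosDef := by
  have hAT : Aᵀ = A := by
    rw [← conjTranspose_eq_transpose_of_trivial]; exact hA.1.eq
  refine Matrix.PosDef.of_dotProduct_mulVec_pos ?_ (fun x hx => ?_)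
  · unfold Matrix.IsHermitian
    rw [conjTranspose_eq_transpose_of_trivial, transpose_mul, transpose_mul,
      transpose_transpose, hAT, mul_assoc]
  · have hBx : B *ᵥ x ≠ 0 := by
      intro h
      apply hx
      have := congrArg (fun v => B⁻¹ *ᵥ v) h
      simpa [mulVec_mulVec, nonsing_inv_mul B hB] using this
    have h := hA.dotProduct_mulVec_pos hBx
    rw [star_trivial] at h ⊢
    have hq : x ⬝ᵥ ((Bᵀ * A * B) *ᵥ x) = (B *ᵥ x) ⬝ᵥ (A *ᵥ (B *ᵥ x)) :=
      calc x ⬝ᵥ ((Bᵀ * A * B) *ᵥ x) = x ⬝ᵥ (Bᵀ *ᵥ (A *ᵥ (B *ᵥ x))) := by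
            rw [← mulVec_mulVec, ← mulVec_mulVec]
        _ = (A *ᵥ (B *ᵥ x)) ⬝ᵥ (B *ᵥ x) := by rw [dot_transpose', transpose_transpose]
        _ = (B *ᵥ x) ⬝ᵥ (A *ᵥ (B *ᵥ x)) := dotProduct_comm _ _
    rw [hq]
    exact h

/-- A real symmetric matrix `C` with `C - 1` PSD and `det C = 1` equals `1`. -/
lemma eq_one_of_det_eq_one' {C : Matrix ι ι ℝ} (h1 : (C - 1).PosSemidef)
    (hdet : C.det = 1) : C = 1 := by
  have hC : C.IsHermitian := by
    have h := h1.isHermitian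
    have h2 : C = (C - 1) + 1 := by abel
    rw [h2]; exact h.add (isHermitian_one)
  have hspec := hC.spectral_theorem
  set U : Matrix ι ι ℝ := (hC.eigenvectorUnitary : Matrix ι ι ℝ) with hU
  have hdiag : star U * (C - 1) * U = diagonal (fun i => hC.eigenvalues i - 1) := by
    have h0 : star U * C * U = diagonal (RCLike.ofReal ∘ hC.eigenvalues) := by
      have := hC.conjStarAlgAut_star_eigenvectorUnitary
      rwa [Unitary.conjStarAlgAut_star_apply] at this
    have hUU : star U * U = 1 := Unitary.coe_star_mul_self _
    have h3 : star U * (C - 1) * U = star U * C * U - star U * U := by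
      noncomm_ring
    rw [h3, h0, hUU]
    ext i j
    by_cases h : i = j <;>
      simp [Matrix.diagonal_apply, Matrix.one_apply, h, Function.comp,
        RCLike.ofReal_real_eq_id, Matrix.sub_apply]
  have hpsd : (diagonal (fun i => hC.eigenvalues i - 1)).PosSemidef := by
    rw [← hdiag]
    have := h1.conjTranspose_mul_mul_same U
    rwa [← star_eq_conjTranspose] at this
  have hge : ∀ i, 1 ≤ hC.eigenvalues i := by
    intro i
    have := (posSemidef_diagonal_iff.mp hpsd) i
    linarith
  have hprod : ∏ i, hC.eigenvalues i = 1 := by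
    have := hC.det_eq_prod_eigenvalues
    rw [hdet] at this
    exact_mod_cast this.symm
  have hall : ∀ i, hC.eigenvalues i = 1 := by
    intro i
    have hsplit : hC.eigenvalues i * ∏ j ∈ Finset.univ.erase i, hC.eigenvalues j = 1 := by
      rw [Finset.mul_prod_erase _ _ (Finset.mem_univ i)]; exact hprod
    have hP : (1:ℝ) ≤ ∏ j ∈ Finset.univ.erase i, hC.eigenvalues j := by
      calc (1:ℝ) = ∏ _j ∈ Finset.univ.erase i, (1:ℝ) := by simp
        _ ≤ ∏ j ∈ Finset.univ.erase i, hC.eigenvalues j :=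
            Finset.prod_le_prod (fun _ _ => zero_le_one) (fun j _ => hge j)
    nlinarith [hge i]
  have hdiag1 : diagonal (RCLike.ofReal ∘ hC.eigenvalues) = (1 : Matrix ι ι ℝ) := by
    ext i j
    by_cases h : i = j <;>
      simp [Matrix.diagonal_apply, Matrix.one_apply, h, hall, RCLike.ofReal_real_eq_id]
  rw [hspec, hdiag1, Unitary.conjStarAlgAut_apply, mul_one]
  exact Unitary.coe_mul_star_self _

namespace Matrix.PosSemidef

open scoped MatrixOrder in
noncomputable def sqrt {A : Matrix ι ι ℝ} (_hA : A.PosSemidef) : Matrix ι ι ℝ := CFC.sqrt A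

open scoped MatrixOrder in
lemma sqrt_mul_self {A : Matrix ι ι ℝ} (hA : A.PosSemidef) : hA.sqrt * hA.sqrt = A :=
  CFC.sqrt_mul_sqrt_self A hA.nonneg

open scoped MatrixOrder in
lemma posSemidef_sqrt {A : Matrix ι ι ℝ} (hA : A.PosSemidef) : hA.sqrt.PosSemidef :=
  (CFC.sqrt_nonneg A).posSemidef

open scoped MatrixOrder in
lemma eq_of_sq_eq_sq {A B : Matrix ι ι ℝ} (hA : A.PosSemidef) (hB : B.PosSemidef)
    (h : A ^ 2 = B ^ 2) : A = B := by
  rw [← CFC.sqrt_sq A hA.nonneg, h, CFC.sqrt_sq B hB.nonneg]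

end Matrix.PosSemidef

/-- If `A ⪰ B ≻ 0` and `det A = det B` then `A = B`. -/
lemma eq_of_sub_posSemidef_det_eq' {A B : Matrix ι ι ℝ} (hA : A.PosDef) (hB : B.PosDef)
    (hAB : (A - B).PosSemidef) (hdet : A.det = B.det) : A = B := by
  set R := hB.posSemidef.sqrt with hRdef
  have hRsq : R * R = B := hB.posSemidef.sqrt_mul_self
  have hRherm : R.IsHermitian := hB.posSemidef.posSemidef_sqrt.isHermitian
  have hRdet : IsUnit R.det := by
    have h : R.det * R.det = B.det := by rw [← det_mul, hRsq]
    have hBdet := hB.det_pos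
    refine isUnit_iff_ne_zero.mpr (fun h0 => ?_)
    rw [h0, mul_zero] at h
    exact absurd h.symm (ne_of_gt hBdet)
  have hRinv : R * R⁻¹ = 1 := mul_nonsing_inv R hRdet
  have hRinv' : R⁻¹ * R = 1 := nonsing_inv_mul R hRdet
  have hRiherm : (R⁻¹).IsHermitian := hRherm.inv
  set C := R⁻¹ * A * R⁻¹ with hCdef
  have hC1 : (C - 1).PosSemidef := by
    have h : C - 1 = (R⁻¹)ᴴ * (A - B) * R⁻¹ := by
      rw [hRiherm.eq]
      have h2 : R⁻¹ * (A - B) * R⁻¹ = R⁻¹ * A * R⁻¹ - R⁻¹ * B * R⁻¹ := by noncomm_ring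
      rw [h2, ← hRsq]
      rw [show R⁻¹ * (R * R) * R⁻¹ = (R⁻¹ * R) * (R * R⁻¹) by noncomm_ring, hRinv, hRinv',
        one_mul]
    rw [h]
    exact hAB.conjTranspose_mul_mul_same R⁻¹
  have hCdet : C.det = 1 := by
    have hRR : R.det * R.det = B.det := by rw [← det_mul, hRsq]
    have h : C.det = R⁻¹.det * A.det * R⁻¹.det := by rw [hCdef, det_mul, det_mul]
    rw [h, det_nonsing_inv, Ring.inverse_eq_inv', hdet, ← hRR]
    have hRne : R.det ≠ 0 := hRdet.ne_zero
    field_simp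
  have hCone : C = 1 := eq_one_of_det_eq_one' hC1 hCdet
  calc A = R * (R⁻¹ * A * R⁻¹) * R := by
          rw [show R * (R⁻¹ * A * R⁻¹) * R = (R * R⁻¹) * A * (R⁻¹ * R) by noncomm_ring,
            hRinv, hRinv', one_mul, mul_one]
    _ = R * C * R := by rw [hCdef]
    _ = B := by rw [hCone, mul_one, hRsq]

omit [DecidableEq ι] in
lemma map_pair' (M : Matrix ι ι ℝ) (u v : ι → ℝ) :
    ((u ⬝ᵥ (M *ᵥ v) : ℝ) : ℂ)
      = (fun i => (u i : ℂ)) ⬝ᵥ ((M.map Complex.ofReal) *ᵥ (fun i => (v i : ℂ))) := by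
  have h1 := RingHom.map_dotProduct Complex.ofRealHom u (M *ᵥ v)
  have h2 : (Complex.ofRealHom ∘ (M *ᵥ v)) = (M.map Complex.ofReal *ᵥ (Complex.ofRealHom ∘ v)) := by
    funext i
    exact RingHom.map_mulVec Complex.ofRealHom M v i
  rw [show ((u ⬝ᵥ (M *ᵥ v) : ℝ) : ℂ) = Complex.ofRealHom (u ⬝ᵥ (M *ᵥ v)) from rfl, h1, h2]
  rfl

omit [DecidableEq ι] in
lemma dot_transposeC' (M : Matrix ι ι ℂ) (u v : ι → ℂ) :
    u ⬝ᵥ (M *ᵥ v) = v ⬝ᵥ (Mᵀ *ᵥ u) := by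
  rw [dotProduct_mulVec, ← mulVec_transpose, dotProduct_comm]

omit [DecidableEq ι] in
lemma uncert_ineq' (A B : Matrix ι ι ℝ) (c : ℝ) (hA : Aᵀ = A) (hB : Bᵀ = -B)
    (h : (A.map Complex.ofReal + (Complex.I * (c : ℂ)) • B.map Complex.ofReal).PosSemidef)
    (x y : ι → ℝ) :
    0 ≤ x ⬝ᵥ (A *ᵥ x) + y ⬝ᵥ (A *ᵥ y) - 2 * c * (y ⬝ᵥ (B *ᵥ x)) := by
  set A' := A.map Complex.ofReal with hA'
  set B' := B.map Complex.ofReal with hB'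
  set xC : ι → ℂ := fun i => (x i : ℂ) with hxC
  set yC : ι → ℂ := fun i => (y i : ℂ) with hyC
  set z : ι → ℂ := xC + (-Complex.I) • yC with hz
  have hsz : star z = xC + Complex.I • yC := by
    funext i
    simp [hz, hxC, hyC, Complex.ext_iff]
  have hA's : A'ᵀ = A' := by rw [hA', ← Matrix.transpose_map, hA]
  have hB's : B'ᵀ = -B' := by
    rw [hB', ← Matrix.transpose_map, hB]
    ext i j
    simp
  have hAsym : xC ⬝ᵥ (A' *ᵥ yC) = yC ⬝ᵥ (A' *ᵥ xC) := by
    rw [dot_transposeC', hA's]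
  have hBx : xC ⬝ᵥ (B' *ᵥ xC) = 0 := by
    have h := dot_transposeC' B' xC xC
    rw [hB's, neg_mulVec, dotProduct_neg] at h
    linear_combination h / 2
  have hBy : yC ⬝ᵥ (B' *ᵥ yC) = 0 := by
    have h := dot_transposeC' B' yC yC
    rw [hB's, neg_mulVec, dotProduct_neg] at h
    linear_combination h / 2
  have hBanti : xC ⬝ᵥ (B' *ᵥ yC) = -(yC ⬝ᵥ (B' *ᵥ xC)) := by
    have h := dot_transposeC' B' yC xC
    rw [hB's, neg_mulVec, dotProduct_neg] at h
    linear_combination h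
  have key : star z ⬝ᵥ ((A' + (Complex.I * (c : ℂ)) • B') *ᵥ z)
      = ((x ⬝ᵥ (A *ᵥ x) + y ⬝ᵥ (A *ᵥ y) - 2 * c * (y ⬝ᵥ (B *ᵥ x)) : ℝ) : ℂ) := by
    rw [hsz, hz]
    simp only [add_mulVec, smul_mulVec, mulVec_add, mulVec_smul,
      dotProduct_add, add_dotProduct, dotProduct_smul, smul_dotProduct, smul_eq_mul]
    rw [hAsym, hBx, hBy, hBanti]
    push_cast [map_pair']
    linear_combination (2 * (c : ℂ) * (yC ⬝ᵥ B' *ᵥ xC) - yC ⬝ᵥ A' *ᵥ yC) * Complex.I_sq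
  have h0 := h.dotProduct_mulVec_nonneg z
  rw [key] at h0
  exact_mod_cast Complex.zero_le_real.mp (by exact_mod_cast h0)

end Helpers

/-- Purity criterion for Gaussian states: if the real symmetric positive definite
covariance matrix `Σ` satisfies the quantum uncertainty condition
`Σ + (iℏ/2) J ≥ 0` (Hermitian positive semidefinite), where `J = [[0, I], [-I, 0]]` is
the standard symplectic matrix, then `det Σ = (ℏ/2)^{2n}` if and only if
`Σ = (ℏ/2) Sᵀ S` for some real symplectic matrix `S` (i.e. `Sᵀ J S = J`). -/
theorem gaussian_pure_iff_symplectic (ℏ : ℝ) (hℏ : 0 < ℏ) (n : ℕ) (hn : 1 ≤ n)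
    (Cov : Matrix (Fin n ⊕ Fin n) (Fin n ⊕ Fin n) ℝ) (hCov : Cov.PosDef)
    (huncert :
      (Cov.map (Complex.ofReal) +
        (Complex.I * ((ℏ / 2 : ℝ) : ℂ)) •
          (Matrix.fromBlocks (0 : Matrix (Fin n) (Fin n) ℝ) 1 (-1) 0).map
            Complex.ofReal).PosSemidef) :
    Cov.det = (ℏ / 2) ^ (2 * n) ↔
      ∃ S : Matrix (Fin n ⊕ Fin n) (Fin n ⊕ Fin n) ℝ,
        Sᵀ * Matrix.fromBlocks (0 : Matrix (Fin n) (Fin n) ℝ) 1 (-1) 0 * S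
            = Matrix.fromBlocks (0 : Matrix (Fin n) (Fin n) ℝ) 1 (-1) 0
        ∧ Cov = (ℏ / 2) • (Sᵀ * S) := by
  set c : ℝ := ℏ / 2 with hc_def
  have hc : 0 < c := by positivity
  have hcne : c ≠ 0 := ne_of_gt hc
  clear_value c
  set J : Matrix (Fin n ⊕ Fin n) (Fin n ⊕ Fin n) ℝ :=
    Matrix.fromBlocks (0 : Matrix (Fin n) (Fin n) ℝ) 1 (-1) 0 with hJ_def
  have hcard : Fintype.card (Fin n ⊕ Fin n) = n + n := by
    simp [Fintype.card_sum]
  have hJT : Jᵀ = -J := by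
    rw [hJ_def, Matrix.fromBlocks_transpose]
    simp [Matrix.fromBlocks_neg]
  have hJJ : J * J = -1 := by
    rw [hJ_def, Matrix.fromBlocks_multiply]
    simp [← Matrix.fromBlocks_one, Matrix.fromBlocks_neg]
  have hJnegJ : J * (-J) = 1 := by rw [mul_neg, hJJ, neg_neg]
  have hJJT : J * Jᵀ = 1 := by rw [hJT, hJnegJ]
  have hJTJ : Jᵀ * J = 1 := by rw [hJT, neg_mul, hJJ, neg_neg]
  have hJdet : IsUnit J.det := by
    apply Matrix.isUnit_det_of_right_inverse (B := -J) hJnegJ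
  have hJinv : J⁻¹ = -J := inv_eq_right_inv hJnegJ
  have hJdet2 : J.det * J.det = 1 := by
    have h := congrArg Matrix.det hJJ
    rw [det_mul, det_neg, det_one, hcard, mul_one] at h
    rw [h]
    exact Even.neg_one_pow ⟨n, rfl⟩
  have hCovT : Covᵀ = Cov := by
    rw [← conjTranspose_eq_transpose_of_trivial]; exact hCov.1.eq
  have hCovdet : IsUnit Cov.det := isUnit_iff_ne_zero.mpr (ne_of_gt hCov.det_pos)
  constructor
  · -- forward direction
    intro hdet
    set P : Matrix (Fin n ⊕ Fin n) (Fin n ⊕ Fin n) ℝ := (c ^ 2) • (Jᵀ * Cov⁻¹ * J) with hP_def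
    have hPdef : P.PosDef := posDef_smul_helper (by positivity) (posDef_conj_helper hCov.inv J hJdet)
    have hsub : (Cov - P).PosSemidef := by
      refine Matrix.PosSemidef.of_dotProduct_mulVec_nonneg ?_ ?_
      · have := hCov.1.sub hPdef.1
        exact this
      · intro x
        rw [star_trivial]
        have e1 : x ⬝ᵥ (P *ᵥ x)
            = c ^ 2 * ((J *ᵥ x) ⬝ᵥ (Cov⁻¹ *ᵥ (J *ᵥ x))) := by
          rw [hP_def, smul_mulVec, dotProduct_smul, smul_eq_mul, ← mulVec_mulVec,
            ← mulVec_mulVec, dot_transpose' Jᵀ x (Cov⁻¹ *ᵥ (J *ᵥ x)), transpose_transpose,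
            dotProduct_comm]
        have hcc : ∀ w : (Fin n ⊕ Fin n) → ℝ, Cov *ᵥ (Cov⁻¹ *ᵥ w) = w := by
          intro w
          rw [mulVec_mulVec, mul_nonsing_inv Cov hCovdet, one_mulVec]
        have e2 : (c • (Cov⁻¹ *ᵥ (J *ᵥ x))) ⬝ᵥ (Cov *ᵥ (c • (Cov⁻¹ *ᵥ (J *ᵥ x))))
            = c ^ 2 * ((J *ᵥ x) ⬝ᵥ (Cov⁻¹ *ᵥ (J *ᵥ x))) := by
          rw [mulVec_smul, hcc, smul_dotProduct, dotProduct_smul, smul_eq_mul, smul_eq_mul,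
            dotProduct_comm]
          ring
        have e3 : (c • (Cov⁻¹ *ᵥ (J *ᵥ x))) ⬝ᵥ (J *ᵥ x)
            = c * ((J *ᵥ x) ⬝ᵥ (Cov⁻¹ *ᵥ (J *ᵥ x))) := by
          rw [smul_dotProduct, smul_eq_mul, dotProduct_comm]
        have hineq := uncert_ineq' Cov J c hCovT hJT huncert x (c • (Cov⁻¹ *ᵥ (J *ᵥ x)))
        rw [e2, e3] at hineq
        rw [sub_mulVec, dotProduct_sub, e1]
        nlinarith [hineq]
    have hdetP : P.det = Cov.det := by
      rw [hP_def, det_smul, det_mul, det_mul, det_transpose, det_nonsing_inv,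
        Ring.inverse_eq_inv', hdet, hcard]
      have h2 : (c:ℝ) ^ (2 * n) ≠ 0 := by positivity
      have hpow : ((c:ℝ)^2)^(n+n) = c^(2*n) * c^(2*n) := by
        rw [← pow_mul, ← pow_add]
        congr 1
        ring
      rw [hpow, show c^(2*n) * c^(2*n) * (J.det * (c^(2*n))⁻¹ * J.det)
          = c^(2*n) * (c^(2*n))⁻¹ * c^(2*n) * (J.det * J.det) from by ring,
        mul_inv_cancel₀ h2, one_mul, hJdet2, mul_one]
    have hCovP : Cov = P := eq_of_sub_posSemidef_det_eq' hCov hPdef hsub hdetP.symm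
    have hkey : Cov * J * Cov = (c ^ 2) • J := by
      nth_rewrite 2 [hCovP]
      rw [hP_def, Matrix.mul_smul]
      congr 1
      rw [show Cov * J * (Jᵀ * Cov⁻¹ * J) = (Cov * (J * Jᵀ)) * Cov⁻¹ * J by noncomm_ring,
        hJJT, mul_one, mul_nonsing_inv Cov hCovdet, one_mul]
    set M : Matrix (Fin n ⊕ Fin n) (Fin n ⊕ Fin n) ℝ := c⁻¹ • Cov with hM_def
    have hM : M.PosDef := posDef_smul_helper (inv_pos.mpr hc) hCov
    have hMJM : M * J * M = J := by
      rw [hM_def, Matrix.smul_mul, Matrix.mul_smul, Matrix.smul_mul, smul_smul, hkey,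
        smul_smul]
      rw [show c⁻¹ * c⁻¹ * c ^ 2 = 1 by field_simp, one_smul]
    set S := hM.posSemidef.sqrt with hS_def
    have hS : S.PosSemidef := hM.posSemidef.posSemidef_sqrt
    have hSS : S * S = M := hM.posSemidef.sqrt_mul_self
    have hSdet : IsUnit S.det := by
      have h : S.det * S.det = M.det := by rw [← det_mul, hSS]
      refine isUnit_iff_ne_zero.mpr (fun h0 => ?_)
      rw [h0, mul_zero] at h
      exact absurd h.symm (ne_of_gt hM.det_pos)
    have hSTr : Sᵀ = S := by
      rw [← conjTranspose_eq_transpose_of_trivial]; exact hS.isHermitian.eq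
    have hTM : (J * M * Jᵀ) * M = 1 := by
      rw [hJT, show J * M * (-J) * M = -(J * (M * J * M)) by noncomm_ring, hMJM, hJJ,
        neg_neg]
    have hMinv : M⁻¹ = J * M * Jᵀ := inv_eq_left_inv hTM
    have hT : (Jᵀ * S * J).PosSemidef := by
      have h := hS.conjTranspose_mul_mul_same J
      rwa [conjTranspose_eq_transpose_of_trivial] at h
    have hT2 : (Jᵀ * S * J) ^ 2 = (S⁻¹) ^ 2 := by
      rw [pow_two, pow_two,
        show Jᵀ * S * J * (Jᵀ * S * J) = Jᵀ * S * (J * Jᵀ) * S * J by noncomm_ring,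
        hJJT, mul_one, show Jᵀ * S * S * J = Jᵀ * (S * S) * J by noncomm_ring, hSS,
        ← Matrix.mul_inv_rev, hSS, hMinv, hJT]
      noncomm_ring
    have hTS : Jᵀ * S * J = S⁻¹ := hT.eq_of_sq_eq_sq hS.inv hT2
    have hSJS : S * J * S = J := by
      have h1 : (S * Jᵀ * S) * J = 1 := by
        rw [show S * Jᵀ * S * J = S * (Jᵀ * S * J) by noncomm_ring, hTS,
          mul_nonsing_inv S hSdet]
      have h2 : J⁻¹ = S * Jᵀ * S := inv_eq_left_inv (by
        rw [show S * Jᵀ * S * J = (S * Jᵀ * S) * J from rfl, h1])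
      have h3 : S * Jᵀ * S = -J := by rw [← h2, hJinv]
      rw [hJT] at h3
      have h4 : -(S * J * S) = -J := by rw [← h3]; noncomm_ring
      exact neg_injective h4
    refine ⟨S, ?_, ?_⟩
    · rw [hSTr]; exact hSJS
    · rw [hSTr, hSS, hM_def, smul_smul]
      rw [mul_inv_cancel₀ hcne, one_smul]
  · -- backward direction
    rintro ⟨S, hSympl, hCovEq⟩
    have hdetS : S.det * S.det = 1 := by
      have h := congrArg Matrix.det hSympl
      rw [det_mul, det_mul, det_transpose] at h
      have hJne : J.det ≠ 0 := hJdet.ne_zero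
      have h' : J.det * (S.det * S.det) = J.det * 1 := by rw [mul_one]; linear_combination h
      exact mul_left_cancel₀ hJne h'
    rw [hCovEq, det_smul, det_mul, det_transpose, hdetS, mul_one, hcard, two_mul]
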